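/- Let j, k, n be positive integers with 1 ≤ j ≤ k ≤ n, h = j+k+n+1, n ≤ ⌊h/2⌋, h even, and (j,k,n) ≠ (1,1,1). Then 24·(2kj + 3nj + 4kn + k + 2n) > 72·(h/2)² − 24·(h/2) + 24·(h−1). -/
import Mathlib


/-- Subcase 1.1 of Lemma 4.3: for even `h = j+k+n+1` with `n ≤ ⌊h/2⌋` and
`(j,k,n) ≠ (1,1,1)`, `Mo(P_L(j,k,n)) > Mo(C_L(1,h−2))`. -/
theorem lemma43_subcase11 (j k n h : ℕ) (hj : 1 ≤ j) (hjk : j ≤ k) (hkn : k ≤ n)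
    (hh : h = j + k + n + 1) (hn : n ≤ h / 2) (heven : Even h)
    (hne : (j, k, n) ≠ (1, 1, 1)) :
    72 * ((h / 2 : ℕ) : ℤ) ^ 2 - 24 * ((h / 2 : ℕ) : ℤ) + 24 * ((h : ℤ) - 1) <
      24 * (2 * (k : ℤ) * (j : ℤ) + 3 * (n : ℤ) * (j : ℤ) + 4 * (k : ℤ) * (n : ℤ) +
        (k : ℤ) + 2 * (n : ℤ)) := by
  obtain ⟨m, hm⟩ := heven
  have hne' : ¬(j = 1 ∧ k = 1 ∧ n = 1) := by simpa [Prod.ext_iff] using hne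
  have hn2 : 2 ≤ n := by omega
  have hhalf : h / 2 = m := by omega
  have hm3 : 3 ≤ m := by omega
  rw [hhalf]
  have hj' : (1 : ℤ) ≤ j := by exact_mod_cast hj
  have hjk' : (j : ℤ) ≤ k := by exact_mod_cast hjk
  have hkn' : (k : ℤ) ≤ n := by exact_mod_cast hkn
  have hn' : (n : ℤ) ≤ m := by exact_mod_cast (hhalf ▸ hn)
  have hm3' : (3 : ℤ) ≤ m := by exact_mod_cast hm3
  have hsum : (j : ℤ) + k + n + 1 = 2 * m := by exact_mod_cast (by omega : j + k + n + 1 = 2 * m)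
  have hh' : (h : ℤ) = j + k + n + 1 := by exact_mod_cast hh
  rw [hh']
  nlinarith [mul_le_mul_of_nonneg_left hn' (by linarith : (0:ℤ) ≤ (m:ℤ) - n),
    mul_le_mul_of_nonneg_left hjk' (by linarith : (0:ℤ) ≤ (n:ℤ)),
    mul_le_mul_of_nonneg_left hj' (by linarith : (0:ℤ) ≤ (k:ℤ)),
    sq_nonneg ((m:ℤ) - n), sq_nonneg ((j:ℤ) + k - m), mul_pos (by linarith : (0:ℤ) < (j:ℤ)) (by linarith : (0:ℤ) < (k:ℤ))]
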